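/- Let X be a tame cantoroid with a fixed compatible metric, h : X → X a minimal homeomorphism, and K a nondegenerate connected component of X. Then the diameters of the sets h^n(K) converge to 0 as n → ∞. -/

import Mathlib

open Set

private lemma homeo_image_cc {X : Type*} [TopologicalSpace X] (h : X ≃ₜ X) (x : X) :
    h '' connectedComponent x = connectedComponent (h x) := by
  refine subset_antisymm (h.continuous.image_connectedComponent_subset x) ?_
  have := h.symm.continuous.image_connectedComponent_subset (h x)
  rw [h.symm_apply_apply] at this
  calc connectedComponent (h x) = h '' (h.symm '' connectedComponent (h x)) := by
        rw [Set.image_image]; simp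
    _ ⊆ h '' connectedComponent x := Set.image_mono this

private lemma iter_image_cc {X : Type*} [TopologicalSpace X] (h : X ≃ₜ X) (x : X) (n : ℕ) :
    (⇑h)^[n] '' connectedComponent x = connectedComponent ((⇑h)^[n] x) := by
  induction n with
  | zero => simp
  | succ n ih =>
      rw [Function.iterate_succ', Set.image_comp, ih, homeo_image_cc, Function.comp_apply]

/-- Let `X` be a tame cantoroid (with a fixed compatible metric), `h : X → X` a minimal
homeomorphism and `K` a nondegenerate connected component of `X`. Then the diameters of
the sets `h^n(K)` converge to `0` as `n → ∞`. -/
theorem stmt_14 {X : Type*} [MetricSpace X] [CompactSpace X] [Nonempty X]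
    (hiso : ∀ x : X, ¬ IsOpen ({x} : Set X))
    (hdense : Dense {x : X | connectedComponent x = {x}})
    (htame : ∀ ε : ℝ, 0 < ε →
      {C : Set X | (∃ x : X, C = connectedComponent x) ∧ C.Nontrivial ∧
        ε ≤ Metric.diam C}.Finite)
    (h : X ≃ₜ X)
    (hmin : ∀ x : X, Dense (Set.range fun n : ℕ => (⇑h)^[n] x))
    (x₀ : X) (K : Set X) (hK : K = connectedComponent x₀) (hKnt : K.Nontrivial) :
    Filter.Tendsto (fun n : ℕ => Metric.diam ((⇑h)^[n] '' K)) Filter.atTop (nhds 0) := by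
  subst hK
  have hinj : ∀ n : ℕ, Function.Injective ((⇑h)^[n]) := fun n =>
    Function.Injective.iterate h.injective n
  have himg : ∀ n : ℕ, (⇑h)^[n] '' connectedComponent x₀
      = connectedComponent ((⇑h)^[n] x₀) := iter_image_cc h x₀
  have hnt : ∀ n : ℕ, ((⇑h)^[n] '' connectedComponent x₀).Nontrivial := fun n =>
    hKnt.image (hinj n)
  -- Key: no periodicity of the component orbit
  have hnoper : ∀ n m : ℕ, n < m →
      (⇑h)^[n] '' connectedComponent x₀ ≠ (⇑h)^[m] '' connectedComponent x₀ := by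
    intro n m hnm heq
    set p := m - n with hp
    have hp0 : 0 < p := Nat.sub_pos_of_lt hnm
    have hper : (⇑h)^[p] '' connectedComponent x₀ = connectedComponent x₀ := by
      have : (⇑h)^[n] '' ((⇑h)^[p] '' connectedComponent x₀)
          = (⇑h)^[n] '' connectedComponent x₀ := by
        rw [← Set.image_comp, ← Function.iterate_add, Nat.add_sub_cancel' hnm.le, ← heq]
      exact (Set.image_injective.mpr (hinj n)) this
    -- every iterate lands in one of the first p images
    have hmod : ∀ k : ℕ, (⇑h)^[k] '' connectedComponent x₀
        = (⇑h)^[k % p] '' connectedComponent x₀ := by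
      intro k
      induction k using Nat.strong_induction_on with
      | _ k ih =>
        rcases lt_or_ge k p with hk | hk
        · rw [Nat.mod_eq_of_lt hk]
        · have h1 : k = (k - p) + p := (Nat.sub_add_cancel hk).symm
          have h2 : (⇑h)^[k] '' connectedComponent x₀
              = (⇑h)^[k - p] '' connectedComponent x₀ := by
            conv_lhs => rw [h1]
            rw [Function.iterate_add, Set.image_comp, hper]
          rw [h2, ih (k - p) (by omega), Nat.mod_eq_sub_mod hk]
    -- the union of the first p images is closed and contains the dense orbit
    set S : Set X := ⋃ k ∈ Finset.range p, (⇑h)^[k] '' connectedComponent x₀ with hS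
    have hSclosed : IsClosed S := by
      apply Set.Finite.isClosed_biUnion (Finset.range p).finite_toSet
      intro k _
      rw [iter_image_cc]
      exact isClosed_connectedComponent
    have hSuniv : S = Set.univ := by
      have horb : Set.range (fun k : ℕ => (⇑h)^[k] x₀) ⊆ S := by
        rintro _ ⟨k, rfl⟩
        have hkmem : (⇑h)^[k] x₀ ∈ (⇑h)^[k % p] '' connectedComponent x₀ := by
          rw [← hmod k]
          exact ⟨x₀, mem_connectedComponent, rfl⟩
        exact Set.mem_biUnion (Finset.mem_range.mpr (Nat.mod_lt k hp0)) hkmem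
      have hd := ((hmin x₀).mono horb).closure_eq
      rwa [hSclosed.closure_eq] at hd
    -- a singleton component exists; it lies in some nondegenerate component: contradiction
    obtain ⟨y, hy⟩ := (hdense.nonempty)
    have hyS : y ∈ S := hSuniv ▸ Set.mem_univ y
    rw [hS, Set.mem_iUnion₂] at hyS
    obtain ⟨k, _, hyk⟩ := hyS
    have hcc : connectedComponent y = (⇑h)^[k] '' connectedComponent x₀ := by
      rw [himg k] at hyk ⊢
      exact (connectedComponent_eq hyk).symm
    have := hnt k
    rw [← hcc, hy] at this
    exact not_nontrivial_singleton this
  -- main convergence argument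
  rw [Metric.tendsto_atTop]
  intro ε hε
  by_contra hcon
  push_neg at hcon
  have hinf : {n : ℕ | ε ≤ Metric.diam ((⇑h)^[n] '' connectedComponent x₀)}.Infinite := by
    intro hfin
    obtain ⟨N, hN⟩ := hfin.bddAbove
    obtain ⟨n, hn, hdn⟩ := hcon (N + 1)
    rw [Real.dist_0_eq_abs, abs_of_nonneg Metric.diam_nonneg] at hdn
    have := hN hdn
    omega
  have hmaps : Set.MapsTo (fun n => (⇑h)^[n] '' connectedComponent x₀)
      {n : ℕ | ε ≤ Metric.diam ((⇑h)^[n] '' connectedComponent x₀)}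
      {C : Set X | (∃ x : X, C = connectedComponent x) ∧ C.Nontrivial ∧ ε ≤ Metric.diam C} := by
    intro n hn
    exact ⟨⟨(⇑h)^[n] x₀, himg n⟩, hnt n, hn⟩
  obtain ⟨n, _, m, _, hne, heq⟩ := hinf.exists_ne_map_eq_of_mapsTo hmaps (htame ε hε)
  rcases hne.lt_or_gt with hlt | hlt
  · exact hnoper n m hlt heq
  · exact hnoper m n hlt heq.symm
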